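/- If X is an infinite subshift and T denotes the set of lengths n for which X has more than one right-special word of length n, then for all q > r: p(q) ≥ p(r) + (q − r) + |T ∩ {r, ..., q−1}|. -/

import Mathlib

variable {A : Type*}

/-- `X ⊆ A^ℤ` is a subshift: closed and invariant under the shift in both directions. -/
def IsSubshift [TopologicalSpace A] (X : Set (ℤ → A)) : Prop :=
  IsClosed X ∧ (∀ x ∈ X, (fun n => x (n + 1)) ∈ X) ∧ (∀ x ∈ X, (fun n => x (n - 1)) ∈ X)

/-- The word `w` occurs in some point of `X`. -/
def InLang (X : Set (ℤ → A)) (w : List A) : Prop :=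
  ∃ x ∈ X, ∃ k : ℤ, ∀ (i : ℕ) (h : i < w.length), x (k + i) = w.get ⟨i, h⟩

/-- The set of letters which can follow `w` in the language of `X`. -/
def Follow (X : Set (ℤ → A)) (w : List A) : Set A := {a | InLang X (w ++ [a])}

/-- `w` is right-special: it can be extended to the right in at least two ways. -/
def RightSpecial (X : Set (ℤ → A)) (w : List A) : Prop := 1 < (Follow X w).ncard

/-- `w` is left-special: it can be extended to the left in at least two ways. -/
def LeftSpecial (X : Set (ℤ → A)) (w : List A) : Prop :=
  1 < {a : A | InLang X (a :: w)}.ncard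

/-- The word complexity function of `X`. -/
noncomputable def complexity (X : Set (ℤ → A)) (n : ℕ) : ℕ :=
  {w : List A | w.length = n ∧ InLang X w}.ncard

section Aux

lemma inLang_suffix {X : Set (ℤ → A)} {u v : List A} (h : InLang X (u ++ v)) : InLang X v := by
  obtain ⟨x, hx, k, hk⟩ := h
  refine ⟨x, hx, k + u.length, ?_⟩
  intro i hi
  have h2 : u.length + i < (u ++ v).length := by simp; omega
  have := hk (u.length + i) h2
  simp only [List.get_eq_getElem] at this ⊢
  rw [List.getElem_append_right (by omega)] at this
  simp only [Nat.add_sub_cancel_left] at this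
  rw [← this]
  push_cast
  ring_nf

lemma inLang_prefix {X : Set (ℤ → A)} {u v : List A} (h : InLang X (u ++ v)) : InLang X u := by
  obtain ⟨x, hx, k, hk⟩ := h
  refine ⟨x, hx, k, ?_⟩
  intro i hi
  have h2 : i < (u ++ v).length := by simp; omega
  have := hk i h2
  simp only [List.get_eq_getElem] at this ⊢
  rwa [List.getElem_append_left (by omega)] at this

lemma follow_nonempty {X : Set (ℤ → A)} {w : List A} (h : InLang X w) :
    (Follow X w).Nonempty := by
  obtain ⟨x, hx, k, hk⟩ := h
  refine ⟨x (k + w.length), x, hx, k, ?_⟩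
  intro i hi
  simp only [List.length_append, List.length_singleton] at hi
  simp only [List.get_eq_getElem]
  by_cases hiw : i < w.length
  · rw [List.getElem_append_left hiw]
    simpa using hk i hiw
  · have hie : i = w.length := by omega
    subst hie
    rw [List.getElem_append_right (le_refl _)]
    simp

lemma inLang_window {X : Set (ℤ → A)} {x : ℤ → A} (hx : x ∈ X) (k : ℤ) (n : ℕ) :
    InLang X (List.ofFn fun i : Fin n => x (k + i)) := by
  refine ⟨x, hx, k, ?_⟩
  intro i hi
  simp only [List.get_eq_getElem, List.getElem_ofFn]

variable [Fintype A]

lemma rs_inLang {X : Set (ℤ → A)} {w : List A} (h : RightSpecial X w) : InLang X w := by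
  have h0 : (Follow X w).Nonempty := by
    rw [← Set.ncard_pos (Set.toFinite _)]; exact Nat.lt_of_lt_of_le Nat.zero_lt_one h.le
  obtain ⟨a, ha⟩ := h0
  exact inLang_prefix ha

lemma Lfin (X : Set (ℤ → A)) (n : ℕ) : {w : List A | w.length = n ∧ InLang X w}.Finite :=
  (List.finite_length_eq A n).subset fun _ hw => hw.1

lemma RSfin (X : Set (ℤ → A)) (n : ℕ) : {w : List A | w.length = n ∧ RightSpecial X w}.Finite :=
  (List.finite_length_eq A n).subset fun _ hw => hw.1

omit [Fintype A] in
lemma concat_inj (f : List A → A) : Function.Injective (fun v : List A => v ++ [f v]) := by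
  intro v v' h
  have := congrArg List.dropLast h
  simpa using this

lemma count_step [Nonempty A] (X : Set (ℤ → A)) (n : ℕ) :
    complexity X n + {w : List A | w.length = n ∧ RightSpecial X w}.ncard
      ≤ complexity X (n + 1) := by
  classical
  set e : List A → A := fun v =>
    if h : (Follow X v).Nonempty then h.choose else Classical.arbitrary A with he_def
  have he : ∀ v : List A, InLang X v → e v ∈ Follow X v := by
    intro v hv
    have h := follow_nonempty hv
    simp only [he_def, dif_pos h]
    exact h.choose_spec
  set e2 : List A → A := fun v =>
    if h : ∃ a ∈ Follow X v, a ≠ e v then h.choose else Classical.arbitrary A with he2_def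
  have he2 : ∀ v : List A, RightSpecial X v → e2 v ∈ Follow X v ∧ e2 v ≠ e v := by
    intro v hv
    have hex : ∃ a ∈ Follow X v, a ≠ e v := by
      by_contra hc
      push_neg at hc
      have hsub : Follow X v ⊆ {e v} := fun a ha => hc a ha
      have : (Follow X v).ncard ≤ 1 := by
        calc (Follow X v).ncard ≤ ({e v} : Set A).ncard :=
              Set.ncard_le_ncard hsub (Set.finite_singleton _)
          _ = 1 := Set.ncard_singleton _
      exact absurd hv (not_lt.mpr this)
    simp only [he2_def, dif_pos hex]
    exact hex.choose_spec
  set L1 := {w : List A | w.length = n + 1 ∧ InLang X w} with hL1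
  set S1 := (fun v : List A => v ++ [e v]) '' {w : List A | w.length = n ∧ InLang X w} with hS1
  set S2 := (fun v : List A => v ++ [e2 v]) '' {w : List A | w.length = n ∧ RightSpecial X w}
    with hS2
  have sub1 : S1 ⊆ L1 := by
    rintro w ⟨v, ⟨hv1, hv2⟩, rfl⟩
    exact ⟨by simp [hv1], he v hv2⟩
  have sub2 : S2 ⊆ L1 := by
    rintro w ⟨v, ⟨hv1, hv2⟩, rfl⟩
    exact ⟨by simp [hv1], (he2 v hv2).1⟩
  have disj : Disjoint S1 S2 := by
    rw [Set.disjoint_left]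
    rintro w ⟨v, hv, rfl⟩ ⟨v2, hv2, heq⟩
    have hdv : v2 = v := by
      have := congrArg List.dropLast heq
      simpa using this
    subst hdv
    have : e2 v2 = e v2 := by
      have := congrArg (fun l : List A => l.getLast?) heq
      simpa using this
    exact (he2 v2 hv2.2).2 this
  have hfin1 : S1.Finite := (Lfin X (n + 1)).subset sub1
  have hfin2 : S2.Finite := (Lfin X (n + 1)).subset sub2
  calc complexity X n + {w : List A | w.length = n ∧ RightSpecial X w}.ncard
      = S1.ncard + S2.ncard := by
        rw [hS1, hS2, Set.ncard_image_of_injective _ (concat_inj e),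
          Set.ncard_image_of_injective _ (concat_inj e2)]
        rfl
    _ = (S1 ∪ S2).ncard := (Set.ncard_union_eq disj hfin1 hfin2).symm
    _ ≤ L1.ncard := Set.ncard_le_ncard (Set.union_subset sub1 sub2) (Lfin X (n + 1))
    _ = complexity X (n + 1) := rfl

lemma mono_step (X : Set (ℤ → A)) (n : ℕ)
    (hn : ∀ w : List A, w.length = n → ¬ RightSpecial X w) :
    complexity X (n + 1) ≤ complexity X n := by
  have key : Set.InjOn List.dropLast {w : List A | w.length = n + 1 ∧ InLang X w} := by
    rintro w ⟨hw1, hw2⟩ w' ⟨hw1', hw2'⟩ hd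
    have hwne : w ≠ [] := by intro h; simp [h] at hw1
    have hw'ne : w' ≠ [] := by intro h; simp [h] at hw1'
    have hwr : w.dropLast ++ [w.getLast hwne] = w := List.dropLast_append_getLast hwne
    have hw'r : w'.dropLast ++ [w'.getLast hw'ne] = w' := List.dropLast_append_getLast hw'ne
    have h1 : w.getLast hwne ∈ Follow X w.dropLast := by
      show InLang X (w.dropLast ++ [w.getLast hwne]); rw [hwr]; exact hw2
    have h2 : w'.getLast hw'ne ∈ Follow X w.dropLast := by
      show InLang X (w.dropLast ++ [w'.getLast hw'ne]); rw [hd, hw'r]; exact hw2'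
    have hcard : (Follow X w.dropLast).ncard ≤ 1 :=
      not_lt.mp (hn w.dropLast (by simp [hw1]))
    have heq := (Set.ncard_le_one (Set.toFinite _)).mp hcard _ h1 _ h2
    rw [← hwr, ← hw'r, hd, heq]
  have himg : List.dropLast '' {w : List A | w.length = n + 1 ∧ InLang X w}
      ⊆ {w : List A | w.length = n ∧ InLang X w} := by
    rintro v ⟨w, ⟨hw1, hw2⟩, rfl⟩
    have hwne : w ≠ [] := by intro h; simp [h] at hw1
    refine ⟨by simp [hw1], ?_⟩
    refine inLang_prefix (v := [w.getLast hwne]) ?_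
    rw [List.dropLast_append_getLast hwne]
    exact hw2
  calc complexity X (n + 1)
      = (List.dropLast '' {w : List A | w.length = n + 1 ∧ InLang X w}).ncard :=
        (Set.ncard_image_of_injOn key).symm
    _ ≤ complexity X n := Set.ncard_le_ncard himg (Lfin X n)

lemma no_rs_mono (X : Set (ℤ → A)) (n : ℕ)
    (hn : ∀ w : List A, w.length = n → ¬ RightSpecial X w) :
    ∀ m, n ≤ m → ∀ w : List A, w.length = m → ¬ RightSpecial X w := by
  intro m hm w hw hrs
  set v := w.drop (m - n) with hv
  have hvl : v.length = n := by simp [hv, hw]; omega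
  have hsub : Follow X w ⊆ Follow X v := by
    intro a ha
    have hwtd : w.take (m - n) ++ (v ++ [a]) = w ++ [a] := by
      rw [← List.append_assoc, List.take_append_drop]
    exact inLang_suffix (u := w.take (m - n)) (by rw [hwtd]; exact ha)
  have : (Follow X w).ncard ≤ (Follow X v).ncard :=
    Set.ncard_le_ncard hsub (Set.toFinite _)
  exact hn v hvl (lt_of_lt_of_le hrs this)

lemma big_complexity (X : Set (ℤ → A)) (hinf : X.Infinite) (C n : ℕ) :
    ∃ m, n ≤ m ∧ C < complexity X m := by
  classical
  obtain ⟨t, hts, htc⟩ := hinf.exists_subset_card_eq (C + 1)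
  set d : (ℤ → A) × (ℤ → A) → ℕ := fun p =>
    if h : p.1 ≠ p.2 then (Function.ne_iff.mp h).choose.natAbs else 0 with hd_def
  set m := max n ((t ×ˢ t).sup d) with hm_def
  refine ⟨2 * m + 1, by omega, ?_⟩
  set φ : (ℤ → A) → List A := fun x => List.ofFn fun i : Fin (2 * m + 1) => x (-(m : ℤ) + i)
    with hφ_def
  have hinj : Set.InjOn φ ↑t := by
    intro x hx y hy hxy
    by_contra hne
    have hne' : (x, y).1 ≠ (x, y).2 := hne
    have hdxy : d (x, y) ≤ m := by
      refine le_trans (Finset.le_sup (f := d) ?_) (le_max_right _ _)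
      exact Finset.mem_product.mpr ⟨hx, hy⟩
    set i0 := (Function.ne_iff.mp hne').choose with hi0
    have hi0s : x i0 ≠ y i0 := (Function.ne_iff.mp hne').choose_spec
    have hd2 : d (x, y) = i0.natAbs := by rw [hd_def]; simp only [dif_pos hne']; rfl
    have hi0b : i0.natAbs ≤ m := hd2 ▸ hdxy
    set j := (i0 + m).toNat with hj_def
    have hj : j < 2 * m + 1 := by omega
    have := congrFun (List.ofFn_injective hxy) ⟨j, hj⟩
    have hcoord : -(m : ℤ) + (j : ℤ) = i0 := by omega
    rw [hcoord] at this
    exact hi0s this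
  have himg : φ '' ↑t ⊆ {w : List A | w.length = 2 * m + 1 ∧ InLang X w} := by
    rintro w ⟨x, hx, rfl⟩
    exact ⟨by simp [hφ_def], inLang_window (hts hx) _ _⟩
  calc C < C + 1 := Nat.lt_succ_self _
    _ = (↑t : Set (ℤ → A)).ncard := by rw [Set.ncard_coe_finset, htc]
    _ = (φ '' ↑t).ncard := (Set.ncard_image_of_injOn hinj).symm
    _ ≤ complexity X (2 * m + 1) := Set.ncard_le_ncard himg (Lfin X _)

lemma rs_exists (X : Set (ℤ → A)) (hinf : X.Infinite) (n : ℕ) :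
    ∃ w : List A, w.length = n ∧ RightSpecial X w := by
  by_contra hc
  push_neg at hc
  have hmono : ∀ m, n ≤ m → complexity X m ≤ complexity X n := by
    intro m hm
    induction m, hm using Nat.le_induction with
    | base => exact le_refl _
    | succ m hm ih =>
      exact le_trans (mono_step X m (no_rs_mono X n hc m hm)) ih
  obtain ⟨m, hm, hC⟩ := big_complexity X hinf (complexity X n) n
  exact absurd (hmono m hm) (not_le.mpr hC)

end Aux

/-- If `X` is an infinite subshift and `T` is the set of lengths with more than one
right-special word, then `p(q) ≥ p(r) + (q − r) + |T ∩ {r, ..., q−1}|`. -/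
theorem complexity_lower_bound [Fintype A] [TopologicalSpace A] [DiscreteTopology A]
    (X : Set (ℤ → A)) (hX : IsSubshift X) (hinf : X.Infinite)
    (T : Set ℕ)
    (hT : T = {n : ℕ | 1 < {w : List A | w.length = n ∧ RightSpecial X w}.ncard})
    (r q : ℕ) (h : r < q) :
    complexity X r + (q - r) + (T ∩ Set.Ico r q).ncard ≤ complexity X q := by
  have hA : Nonempty A := by
    obtain ⟨x, hx⟩ := hinf.nonempty
    exact ⟨x 0⟩
  have hstep : ∀ n : ℕ, complexity X n + 1 + (T ∩ {n}).ncard ≤ complexity X (n + 1) := by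
    intro n
    have h1 := count_step X n
    have hne : ({w : List A | w.length = n ∧ RightSpecial X w}).Nonempty := rs_exists X hinf n
    have hpos : 1 ≤ {w : List A | w.length = n ∧ RightSpecial X w}.ncard :=
      (Set.ncard_pos (RSfin X n)).mpr hne
    by_cases hn : n ∈ T
    · have h2 : 1 < {w : List A | w.length = n ∧ RightSpecial X w}.ncard := by
        rw [hT] at hn; exact hn
      have h3 : (T ∩ {n} : Set ℕ) = {n} := by
        ext x; simp only [Set.mem_inter_iff, Set.mem_singleton_iff, and_iff_right_iff_imp]
        rintro rfl; exact hn
      rw [h3, Set.ncard_singleton]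
      omega
    · have h3 : (T ∩ {n} : Set ℕ) = ∅ := by
        ext x; simp only [Set.mem_inter_iff, Set.mem_singleton_iff, Set.mem_empty_iff_false,
          iff_false, not_and]
        rintro hxT rfl; exact hn hxT
      rw [h3, Set.ncard_empty]
      omega
  induction q, h using Nat.le_induction with
  | base =>
    have hIco : Set.Ico r (r + 1) = {r} := by ext x; simp; omega
    have : r + 1 - r = 1 := by omega
    rw [hIco, this]
    exact hstep r
  | succ q hq ih =>
    have hsub : T ∩ Set.Ico r (q + 1) ⊆ (T ∩ Set.Ico r q) ∪ (T ∩ {q}) := by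
      intro x ⟨hxT, hx1, hx2⟩
      by_cases hxq : x = q
      · exact Or.inr ⟨hxT, hxq⟩
      · exact Or.inl ⟨hxT, hx1, by omega⟩
    have hfin : ((T ∩ Set.Ico r q) ∪ (T ∩ {q})).Finite :=
      ((Set.finite_Ico r q).inter_of_right T).union ((Set.finite_singleton q).inter_of_right T)
    have h3 : (T ∩ Set.Ico r (q + 1)).ncard
        ≤ (T ∩ Set.Ico r q).ncard + (T ∩ {q}).ncard :=
      le_trans (Set.ncard_le_ncard hsub hfin) (Set.ncard_union_le _ _)
    have h4 := hstep q
    have h5 : q + 1 - r = (q - r) + 1 := by omega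
    omega
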